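/- Let a symmetric matrix A have eigenvalues contained in [λmin, λmax] with 0 < λmin. The Chebyshev semi-iteration of degree m applied to the interval [λmin, λmax] reduces every error component with eigenvalue λ in that interval by a factor at most 1/T_m((λmax+λmin)/(λmax−λmin)), where T_m is the Chebyshev polynomial of the first kind; this bound is ≤ 2·ρᵐ/(1+ρ^{2m}) with ρ = (√κ̂ − 1)/(√κ̂ + 1), κ̂ = λmax/λmin. -/

import Mathlib

open Polynomial Chebyshev in
lemma T_half_add_inv (x : ℝ) (hx : x ≠ 0) : ∀ n : ℕ,
    (Polynomial.Chebyshev.T ℝ n).eval ((x + x⁻¹) / 2) = (x ^ n + x⁻¹ ^ n) / 2 := by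
  have key : ∀ n : ℕ, (Polynomial.Chebyshev.T ℝ n).eval ((x + x⁻¹) / 2) = (x ^ n + x⁻¹ ^ n) / 2 ∧
      (Polynomial.Chebyshev.T ℝ (n+1)).eval ((x + x⁻¹) / 2) = (x ^ (n+1) + x⁻¹ ^ (n+1)) / 2 := by
    intro n
    induction n with
    | zero => constructor <;> simp
    | succ k ih =>
      refine ⟨ih.2, ?_⟩
      have h2 : ((k:ℤ) + 1 + 1 : ℤ) = (k : ℤ) + 2 := by ring
      have := Polynomial.Chebyshev.T_add_two ℝ (k : ℤ)
      have hcast : ((k+1:ℕ):ℤ)+1 = (k:ℤ)+2 := by push_cast; ring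
      rw [hcast, this]
      simp only [Polynomial.eval_sub, Polynomial.eval_mul, Polynomial.eval_X, Polynomial.eval_ofNat]
      have hk1 : (Polynomial.Chebyshev.T ℝ ((k:ℤ)+1)).eval ((x + x⁻¹) / 2) = (x ^ (k+1) + x⁻¹ ^ (k+1)) / 2 := by
        exact_mod_cast ih.2
      have hk0 : (Polynomial.Chebyshev.T ℝ (k:ℤ)).eval ((x + x⁻¹) / 2) = (x ^ k + x⁻¹ ^ k) / 2 := by
        exact_mod_cast ih.1
      rw [hk1, hk0]
      field_simp
      linear_combination (x * x⁻¹ ^ k - x⁻¹ * x⁻¹ ^ k) * mul_inv_cancel₀ hx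
  exact fun n => (key n).1

/-- Chebyshev semi-iteration error bound: on the spectral interval [λmin, λmax] the
normalized Chebyshev error polynomial is bounded by 1/T_m((κ+1)/(κ−1)), which in turn is
bounded by 2ρᵐ/(1+ρ^{2m}) with ρ = (√κ−1)/(√κ+1), κ = λmax/λmin. -/
theorem stmt9 (m : ℕ) (lmin lmax : ℝ) (h0 : 0 < lmin) (hlt : lmin < lmax)
    (κ : ℝ) (hκ : κ = lmax / lmin)
    (ρ : ℝ) (hρ : ρ = (Real.sqrt κ - 1) / (Real.sqrt κ + 1))
    (pm : ℝ → ℝ)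
    (hpm : ∀ lam : ℝ, pm lam =
      (Polynomial.Chebyshev.T ℝ m).eval ((lmax + lmin - 2 * lam) / (lmax - lmin)) /
      (Polynomial.Chebyshev.T ℝ m).eval ((lmax + lmin) / (lmax - lmin))) :
    (∀ lam ∈ Set.Icc lmin lmax,
        |pm lam| ≤ 1 / (Polynomial.Chebyshev.T ℝ m).eval ((κ + 1) / (κ - 1))) ∧
    1 / (Polynomial.Chebyshev.T ℝ m).eval ((κ + 1) / (κ - 1)) ≤
      2 * ρ ^ m / (1 + ρ ^ (2 * m)) := by
  have hd : (0:ℝ) < lmax - lmin := by linarith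
  have hκ1 : 1 < κ := by
    rw [hκ]; rw [lt_div_iff₀ h0]; linarith
  have hu : 1 < Real.sqrt κ := by
    nlinarith [Real.sq_sqrt (by linarith : (0:ℝ) ≤ κ), Real.sqrt_nonneg κ]
  set u := Real.sqrt κ with hu'
  have hκu : κ = u ^ 2 := by rw [hu']; rw [Real.sq_sqrt]; linarith
  have hρ0 : 0 < ρ := by rw [hρ]; exact div_pos (by linarith) (by linarith)
  have hρ1 : ρ < 1 := by
    rw [hρ, div_lt_one (by linarith)]; linarith
  -- (κ+1)/(κ-1) = (ρ⁻¹ + ρ)/2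
  have hρinv : ρ⁻¹ = (u + 1) / (u - 1) := by
    rw [hρ]; rw [inv_div]
  have hc : (κ + 1) / (κ - 1) = (ρ⁻¹ + ρ) / 2 := by
    have e1 : u - 1 ≠ 0 := by linarith
    have e2 : u + 1 ≠ 0 := by linarith
    have e3 : u ^ 2 - 1 ≠ 0 := by nlinarith
    rw [hρinv, hρ, hκu]
    field_simp
    ring
  have hTval : (Polynomial.Chebyshev.T ℝ m).eval ((κ + 1) / (κ - 1))
      = ((ρ⁻¹) ^ m + ρ ^ m) / 2 := by
    rw [hc]
    have := T_half_add_inv ρ⁻¹ (by positivity) m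
    rw [inv_inv] at this
    exact this
  have hpow : 0 < ρ ^ m := by positivity
  have hipow : (ρ⁻¹) ^ m = (ρ ^ m)⁻¹ := by rw [inv_pow]
  have hT1 : 1 ≤ (Polynomial.Chebyshev.T ℝ m).eval ((κ + 1) / (κ - 1)) := by
    rw [hTval, hipow]
    rw [le_div_iff₀ (by norm_num : (0:ℝ) < 2)]
    have h3 : (ρ ^ m)⁻¹ + ρ ^ m - 2 = (ρ ^ m - 1) ^ 2 / ρ ^ m := by
      field_simp; ring
    have h4 : (0:ℝ) ≤ (ρ ^ m - 1) ^ 2 / ρ ^ m := by positivity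
    linarith
  have hT0 : 0 < (Polynomial.Chebyshev.T ℝ m).eval ((κ + 1) / (κ - 1)) := by linarith
  constructor
  · intro lam hlam
    obtain ⟨hl1, hl2⟩ := hlam
    set y := (lmax + lmin - 2 * lam) / (lmax - lmin) with hy
    have hy1 : -1 ≤ y := by
      rw [hy, le_div_iff₀ hd]; linarith
    have hy2 : y ≤ 1 := by
      rw [hy, div_le_one hd]; linarith
    obtain ⟨θ, _, hθ⟩ := Real.surjOn_cos ⟨hy1, hy2⟩
    have hnum : |(Polynomial.Chebyshev.T ℝ m).eval y| ≤ 1 := by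
      rw [← hθ, Polynomial.Chebyshev.T_real_cos]
      exact Real.abs_cos_le_one _
    have hden : (lmax + lmin) / (lmax - lmin) = (κ + 1) / (κ - 1) := by
      rw [hκ]
      field_simp
    rw [hpm lam, hden, abs_div, abs_of_pos hT0]
    gcongr
    all_goals first | exact hT0.le | exact hnum
  · rw [hTval, hipow]
    apply le_of_eq
    rw [one_div, pow_mul, sq, mul_pow]
    field_simp
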